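/- arXiv:1209.3467 — 4 statements merged into one kernel-verified Lean document; each statement's English description precedes it below -/
import Mathlib

section
/- Let G be a group and let n, k be positive integers with 1 ≤ k ≤ n. Then [N_{n,k}(G), G] = N_{n+1,k+1}(G), and for every positive integer m, N_{n,k}(G)^{4^m} ≤ N_{n+m,k}(G). -/
/-- `H^m`: the subgroup generated by the `m`-th powers of elements of `H`. -/
def sPow {G : Type*} [Group G] (H : Subgroup G) (m : ℕ) : Subgroup G :=
  Subgroup.closure ((fun h => h ^ m) '' (H : Set G))

/-- `γ_n(G)`, the lower central series indexed so that `γ_1(G) = G`. -/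
def gamma (G : Type*) [Group G] (n : ℕ) : Subgroup G :=
  (⊤ : Subgroup G).lowerCentralSeries (n - 1)

/-- `N_{n,k}(G) = γ_k(G)^{4^{n-k}} ⋯ γ_n(G)` (product of normal subgroups = join). -/
def Nnk (G : Type*) [Group G] (n k : ℕ) : Subgroup G :=
  ⨆ i ∈ Finset.Icc k n, sPow (gamma G i) (4 ^ (n - i))

/-- The `λ̄`-series: `λ̄_1(G) = G`, `λ̄_{n+1}(G) = λ̄_n(G)^4 [λ̄_n(G), G]`. -/
def lambdaBar (G : Type*) [Group G] : ℕ → Subgroup G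
  | 0 => ⊤
  | 1 => ⊤
  | (n + 2) => sPow (lambdaBar G (n + 1)) 4 ⊔ ⁅lambdaBar G (n + 1), (⊤ : Subgroup G)⁆

/-- The lower `p`-central series: `λ_1(G) = G`, `λ_{n+1}(G) = λ_n(G)^p [λ_n(G), G]`. -/
def lowP (G : Type*) [Group G] (p : ℕ) : ℕ → Subgroup G
  | 0 => ⊤
  | 1 => ⊤
  | (n + 2) => sPow (lowP G p (n + 1)) p ⊔ ⁅lowP G p (n + 1), (⊤ : Subgroup G)⁆

/-- `Ω_i(G)`: subgroup generated by elements of order dividing `p^i`. -/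
def Omega (G : Type*) [Group G] (p i : ℕ) : Subgroup G :=
  Subgroup.closure {x : G | x ^ p ^ i = 1}

/-- A finite `p`-group is `p`-central if `Ω_1(G) ≤ Z(G)` for odd `p`,
resp. `Ω_2(G) ≤ Z(G)` for `p = 2`. -/
def IsPCentral (p : ℕ) (G : Type*) [Group G] : Prop :=
  if p = 2 then Omega G 2 2 ≤ Subgroup.center G else Omega G p 1 ≤ Subgroup.center G

instance gamma_normal (G : Type*) [Group G] (n : ℕ) : (gamma G n).Normal :=
  inferInstanceAs ((⊤ : Subgroup G).lowerCentralSeries (n - 1)).Normal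

instance sPow_normal {G : Type*} [Group G] (H : Subgroup G) [hH : H.Normal] (m : ℕ) :
    (sPow H m).Normal := by
  constructor
  intro x hx g
  induction hx using Subgroup.closure_induction with
  | mem y hy =>
    obtain ⟨h, hh, rfl⟩ := hy
    exact Subgroup.subset_closure ⟨g * h * g⁻¹, hH.conj_mem h hh g, by
      simp [conj_pow]⟩
  | one => simpa using (sPow H m).one_mem
  | mul a b _ _ ha hb =>
    have : g * (a * b) * g⁻¹ = (g * a * g⁻¹) * (g * b * g⁻¹) := by group
    rw [this]; exact (sPow H m).mul_mem ha hb
  | inv a _ ha =>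
    have : g * a⁻¹ * g⁻¹ = (g * a * g⁻¹)⁻¹ := by group
    rw [this]; exact (sPow H m).inv_mem ha

theorem normal_iSup {G : Type*} [Group G] {ι : Sort*} (f : ι → Subgroup G)
    (h : ∀ i, (f i).Normal) : (⨆ i, f i).Normal := by
  constructor
  intro x hx g
  refine Subgroup.iSup_induction f (C := fun y => g * y * g⁻¹ ∈ ⨆ i, f i) hx
    (fun i y hy => Subgroup.mem_iSup_of_mem i ((h i).conj_mem y hy g)) (by simpa using Subgroup.one_mem (⨆ i, f i)) ?_
  intro a b ha hb
  have : g * (a * b) * g⁻¹ = (g * a * g⁻¹) * (g * b * g⁻¹) := by group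
  rw [this]; exact Subgroup.mul_mem _ ha hb

instance Nnk_normal (G : Type*) [Group G] (n k : ℕ) : (Nnk G n k).Normal :=
  normal_iSup _ fun i => normal_iSup _ fun _ => inferInstance

instance lambdaBar_normal (G : Type*) [Group G] : ∀ n, (lambdaBar G n).Normal
  | 0 => inferInstanceAs (⊤ : Subgroup G).Normal
  | 1 => inferInstanceAs (⊤ : Subgroup G).Normal
  | (n + 2) => by
    haveI := lambdaBar_normal G (n + 1)
    exact inferInstanceAs
      (sPow (lambdaBar G (n + 1)) 4 ⊔ ⁅lambdaBar G (n + 1), (⊤ : Subgroup G)⁆).Normal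

instance lowP_normal (G : Type*) [Group G] (p : ℕ) : ∀ n, (lowP G p n).Normal
  | 0 => inferInstanceAs (⊤ : Subgroup G).Normal
  | 1 => inferInstanceAs (⊤ : Subgroup G).Normal
  | (n + 2) => by
    haveI := lowP_normal G p (n + 1)
    exact inferInstanceAs
      (sPow (lowP G p (n + 1)) p ⊔ ⁅lowP G p (n + 1), (⊤ : Subgroup G)⁆).Normal


open scoped commutatorElement

section AuxElem
variable {G : Type*} [Group G]
open Subgroup

lemma commEl_mul_left (a b g : G) : ⁅a * b, g⁆ = a * ⁅b, g⁆ * a⁻¹ * ⁅a, g⁆ := by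
  simp only [commutatorElement_def]; group

lemma commEl_inv_left (a g : G) : ⁅a⁻¹, g⁆ = a⁻¹ * ⁅a, g⁆⁻¹ * a := by
  simp only [commutatorElement_def]; group

lemma commEl_one_left (g : G) : ⁅(1 : G), g⁆ = 1 := by
  simp [commutatorElement_def]

lemma Commute.commEl_pow {a b : G} (h : Commute a ⁅a, b⁆) (m : ℕ) :
    ⁅a ^ m, b⁆ = ⁅a, b⁆ ^ m := by
  induction m with
  | zero => simp [commEl_one_left]
  | succ m ih =>
    have h2 : a * ⁅a, b⁆ ^ m * a⁻¹ = ⁅a, b⁆ ^ m := by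
      rw [(h.pow_right m).eq, mul_inv_cancel_right]
    rw [pow_succ', commEl_mul_left, ih, h2, ← pow_succ]

lemma comm_pow_sub_mem (M : Subgroup G) [M.Normal] {x g : G}
    (h : ⁅x, ⁅x, g⁆⁆ ∈ M) (m : ℕ) : ⁅x ^ m, g⁆ * (⁅x, g⁆ ^ m)⁻¹ ∈ M := by
  let f := QuotientGroup.mk' M
  have h1 : f ⁅x, ⁅x, g⁆⁆ = 1 := (QuotientGroup.eq_one_iff _).mpr h
  rw [map_commutatorElement, map_commutatorElement] at h1
  have hc : Commute (f x) ⁅f x, f g⁆ := commutatorElement_eq_one_iff_commute.mp h1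
  rw [← QuotientGroup.eq_one_iff (G := G) (N := M)]
  show f (⁅x ^ m, g⁆ * (⁅x, g⁆ ^ m)⁻¹) = 1
  rw [map_mul, map_inv, map_pow, map_commutatorElement, map_commutatorElement, map_pow,
    hc.commEl_pow m, mul_inv_cancel]

lemma commEl_pow_left_mem {K M : Subgroup G} [M.Normal] (hMK : M ≤ K) {x g : G}
    (h : ⁅x, ⁅x, g⁆⁆ ∈ M) (m : ℕ) (hm : ⁅x, g⁆ ^ m ∈ K) : ⁅x ^ m, g⁆ ∈ K := by
  have h1 := hMK (comm_pow_sub_mem M h m)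
  have h2 : ⁅x ^ m, g⁆ = ⁅x ^ m, g⁆ * (⁅x, g⁆ ^ m)⁻¹ * ⁅x, g⁆ ^ m := by group
  rw [h2]; exact K.mul_mem h1 hm

lemma commEl_pow_right_mem {K M : Subgroup G} [M.Normal] (hMK : M ≤ K) {x g : G}
    (h : ⁅x, ⁅x, g⁆⁆ ∈ M) (m : ℕ) (hm : ⁅x ^ m, g⁆ ∈ K) : ⁅x, g⁆ ^ m ∈ K := by
  have h1 := hMK (comm_pow_sub_mem M h m)
  have h2 : ⁅x, g⁆ ^ m = (⁅x ^ m, g⁆ * (⁅x, g⁆ ^ m)⁻¹)⁻¹ * ⁅x ^ m, g⁆ := by group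
  rw [h2]; exact K.mul_mem (K.inv_mem h1) hm

lemma commEl_xxg_mem {H K : Subgroup G} {x g : G} (hx : x ∈ H) (hg : g ∈ K) :
    ⁅x, ⁅x, g⁆⁆ ∈ ⁅⁅H, K⁆, H⁆ := by
  rw [← commutatorElement_inv]
  exact inv_mem (Subgroup.commutator_mem_commutator
    (Subgroup.commutator_mem_commutator hx hg) hx)

lemma pow_mem_sPow {H : Subgroup G} {h : G} (hh : h ∈ H) (m : ℕ) : h ^ m ∈ sPow H m :=
  Subgroup.subset_closure ⟨h, hh, rfl⟩

lemma sPow_mono {H K : Subgroup G} (h : H ≤ K) (m : ℕ) : sPow H m ≤ sPow K m :=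
  Subgroup.closure_mono (Set.image_mono h)

lemma sPow_le' {H K : Subgroup G} {m : ℕ} (h : ∀ x ∈ H, x ^ m ∈ K) : sPow H m ≤ K :=
  (Subgroup.closure_le _).mpr (by rintro _ ⟨x, hx, rfl⟩; exact h x hx)

lemma sPow_one_eq (H : Subgroup G) : sPow H 1 = H := by
  simp only [sPow, pow_one, Set.image_id']
  exact Subgroup.closure_eq H

lemma sPow_pow_le {H K : Subgroup G} {a : ℕ} (b : ℕ) (h : sPow H a ≤ K) :
    sPow H (a * b) ≤ sPow K b := by
  apply sPow_le'
  intro x hx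
  rw [pow_mul]
  exact pow_mem_sPow (h (pow_mem_sPow hx a)) b

lemma sPow_closure_le (S : Set G) [hN : (Subgroup.closure S).Normal] (m : ℕ) :
    sPow (Subgroup.closure S) m ≤
      Subgroup.closure ((fun h => h ^ m) '' S) ⊔ ⁅Subgroup.closure S, Subgroup.closure S⁆ := by
  set N := Subgroup.closure S with hNdef
  set K := Subgroup.closure ((fun h => h ^ m) '' S) ⊔ ⁅N, N⁆ with hK
  apply sPow_le'
  intro h hh
  induction hh using Subgroup.closure_induction with
  | mem s hs =>
    exact le_sup_left (a := Subgroup.closure ((fun h => h ^ m) '' S)) (b := ⁅N, N⁆)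
      (Subgroup.subset_closure ⟨s, hs, rfl⟩)
  | one => rw [one_pow]; exact K.one_mem
  | mul a b ha' hb' ha hb =>
    have hD : ⁅N, N⁆ ≤ K := le_sup_right
    let f := QuotientGroup.mk' ⁅N, N⁆
    have h1 : f ⁅a, b⁆ = 1 := (QuotientGroup.eq_one_iff _).mpr
      (Subgroup.commutator_mem_commutator ha' hb')
    rw [map_commutatorElement] at h1
    have hc : Commute (f a) (f b) := commutatorElement_eq_one_iff_commute.mp h1
    have hmem : (a * b) ^ m * ((b ^ m)⁻¹ * (a ^ m)⁻¹) ∈ ⁅N, N⁆ := by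
      rw [← QuotientGroup.eq_one_iff (N := ⁅N, N⁆)]
      show f ((a * b) ^ m * ((b ^ m)⁻¹ * (a ^ m)⁻¹)) = 1
      rw [map_mul, map_mul, map_inv, map_inv, map_pow, map_pow, map_pow, map_mul, hc.mul_pow]
      group
    have h2 : (a * b) ^ m = ((a * b) ^ m * ((b ^ m)⁻¹ * (a ^ m)⁻¹)) * (a ^ m * b ^ m) := by
      group
    rw [h2]
    exact K.mul_mem (hD hmem) (K.mul_mem ha hb)
  | inv a ha' ha => rw [inv_pow]; exact K.inv_mem ha

lemma sPow_sup_le (A B : Subgroup G) [A.Normal] [B.Normal] (m : ℕ) :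
    sPow (A ⊔ B) m ≤ sPow A m ⊔ sPow B m ⊔ ⁅A ⊔ B, A ⊔ B⁆ := by
  haveI : (Subgroup.closure ((A : Set G) ∪ (B : Set G))).Normal := by
    rw [Subgroup.closure_union, Subgroup.closure_eq, Subgroup.closure_eq]; infer_instance
  have h := sPow_closure_le ((A : Set G) ∪ (B : Set G)) m
  rw [Subgroup.closure_union, Subgroup.closure_eq, Subgroup.closure_eq, Set.image_union,
    Subgroup.closure_union] at h
  exact h

lemma sPow_sPow_le (H : Subgroup G) [H.Normal] (q m : ℕ) :
    sPow (sPow H q) m ≤ sPow H (q * m) ⊔ ⁅sPow H q, sPow H q⁆ := by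
  haveI : (Subgroup.closure ((fun h => h ^ q) '' (H : Set G))).Normal := sPow_normal H q
  have h := sPow_closure_le ((fun h => h ^ q) '' (H : Set G)) m
  rw [Set.image_image] at h
  have h2 : (fun x => (x ^ q) ^ m) '' (H : Set G) = (fun x => x ^ (q * m)) '' (H : Set G) := by
    apply Set.image_congr; intro x _; rw [pow_mul]
  rw [h2] at h
  exact h

lemma comm_sPow_top_le (N : Subgroup G) [N.Normal] (m : ℕ) :
    ⁅sPow N m, (⊤ : Subgroup G)⁆ ≤ sPow ⁅N, ⊤⁆ m ⊔ ⁅⁅N, (⊤ : Subgroup G)⁆, N⁆ := by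
  set K := sPow ⁅N, (⊤ : Subgroup G)⁆ m ⊔ ⁅⁅N, (⊤ : Subgroup G)⁆, N⁆ with hK
  haveI hKn : K.Normal := Subgroup.sup_normal _ _
  rw [Subgroup.commutator_le]
  intro a ha g _
  induction ha using Subgroup.closure_induction with
  | mem y hy =>
    obtain ⟨x, hx, rfl⟩ := hy
    refine commEl_pow_left_mem (M := ⁅⁅N, (⊤ : Subgroup G)⁆, N⁆) le_sup_right
      (commEl_xxg_mem hx (Subgroup.mem_top g)) m ?_
    exact le_sup_left (a := sPow ⁅N, (⊤ : Subgroup G)⁆ m)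
      (pow_mem_sPow (Subgroup.commutator_mem_commutator hx (Subgroup.mem_top g)) m)
  | one => rw [commEl_one_left]; exact K.one_mem
  | mul a b _ _ ha hb =>
    rw [commEl_mul_left]
    exact K.mul_mem (hKn.conj_mem _ hb a) ha
  | inv a _ ha =>
    rw [commEl_inv_left]
    have h3 : a⁻¹ * ⁅a, g⁆⁻¹ * a = a⁻¹ * ⁅a, g⁆⁻¹ * (a⁻¹)⁻¹ := by rw [inv_inv]
    rw [h3]
    exact hKn.conj_mem _ (K.inv_mem ha) a⁻¹

lemma comm_sup_top_le {A B K : Subgroup G} [hKn : K.Normal]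
    (hA : ⁅A, (⊤ : Subgroup G)⁆ ≤ K) (hB : ⁅B, (⊤ : Subgroup G)⁆ ≤ K) :
    ⁅A ⊔ B, (⊤ : Subgroup G)⁆ ≤ K := by
  rw [Subgroup.commutator_le]
  intro a ha g _
  rw [← Subgroup.closure_eq A, ← Subgroup.closure_eq B, ← Subgroup.closure_union] at ha
  induction ha using Subgroup.closure_induction with
  | mem s hs =>
    rcases hs with h | h
    · exact hA (Subgroup.commutator_mem_commutator h (Subgroup.mem_top g))
    · exact hB (Subgroup.commutator_mem_commutator h (Subgroup.mem_top g))
  | one => rw [commEl_one_left]; exact K.one_mem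
  | mul a b _ _ ha hb =>
    rw [commEl_mul_left]
    exact K.mul_mem (hKn.conj_mem _ hb a) ha
  | inv a _ ha =>
    rw [commEl_inv_left]
    have h3 : a⁻¹ * ⁅a, g⁆⁻¹ * a = a⁻¹ * ⁅a, g⁆⁻¹ * (a⁻¹)⁻¹ := by rw [inv_inv]
    rw [h3]
    exact hKn.conj_mem _ (K.inv_mem ha) a⁻¹

lemma gamma_succ_eq (i : ℕ) (hi : 1 ≤ i) :
    gamma G (i + 1) = ⁅gamma G i, (⊤ : Subgroup G)⁆ := by
  have h : i - 1 + 1 = i := Nat.succ_pred_eq_of_pos hi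
  show (⊤ : Subgroup G).lowerCentralSeries (i + 1 - 1) = ⁅(⊤ : Subgroup G).lowerCentralSeries (i - 1), ⊤⁆
  rw [Nat.add_sub_cancel, ← h, Subgroup.lowerCentralSeries_succ]
  rfl

lemma comp_le_Nnk {n k i : ℕ} (hki : k ≤ i) (hin : i ≤ n) :
    sPow (gamma G i) (4 ^ (n - i)) ≤ Nnk G n k := by
  have hmem : i ∈ Finset.Icc k n := Finset.mem_Icc.mpr ⟨hki, hin⟩
  exact le_iSup₂ (f := fun i (_ : i ∈ Finset.Icc k n) => sPow (gamma G i) (4 ^ (n - i))) i hmem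

lemma Nnk_anti (n : ℕ) {k k' : ℕ} (h : k ≤ k') : Nnk G n k' ≤ Nnk G n k := by
  refine iSup₂_le fun i hi => ?_
  obtain ⟨h1, h2⟩ := Finset.mem_Icc.mp hi
  exact comp_le_Nnk (le_trans h h1) h2

lemma Nnk_bot (n : ℕ) : Nnk G n (n + 1) = ⊥ := by
  unfold Nnk
  have h : Finset.Icc (n + 1) n = ∅ := Finset.Icc_eq_empty (by omega)
  simp [h]

lemma Nnk_decomp {n k : ℕ} (h : k ≤ n) :
    Nnk G n k = sPow (gamma G k) (4 ^ (n - k)) ⊔ Nnk G n (k + 1) := by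
  apply le_antisymm
  · refine iSup₂_le fun i hi => ?_
    obtain ⟨h1, h2⟩ := Finset.mem_Icc.mp hi
    rcases eq_or_lt_of_le h1 with rfl | hlt
    · exact le_sup_left
    · exact le_sup_right.trans' (comp_le_Nnk hlt h2)
  · exact sup_le (comp_le_Nnk le_rfl h) (Nnk_anti n (Nat.le_succ k))

lemma Nnk_self (n : ℕ) : Nnk G n n = gamma G n := by
  rw [Nnk_decomp le_rfl, Nnk_bot, sup_bot_eq, Nat.sub_self, pow_zero, sPow_one_eq]

end AuxElem

section Main
variable {G : Type*} [Group G]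
open Subgroup

lemma psi (G : Type*) [Group G] :
    ∀ n d k : ℕ, k + d = n → 1 ≤ k →
      ⁅Nnk G n k, (⊤ : Subgroup G)⁆ ≤ Nnk G (n + 1) (k + 1) ∧
        sPow (Nnk G n k) 4 ≤ Nnk G (n + 1) k := by
  intro n
  induction n using Nat.strong_induction_on with
  | _ n IHn =>
  intro d
  induction d with
  | zero =>
    intro k hkd hk
    have hkn : k = n := by omega
    subst hkn
    constructor
    · rw [Nnk_self, Nnk_self, ← gamma_succ_eq k hk]
    · rw [Nnk_self]
      have h := comp_le_Nnk (G := G) (n := k + 1) (k := k) (i := k) le_rfl (Nat.le_succ k)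
      have he : k + 1 - k = 1 := by omega
      rw [he, pow_one] at h
      exact h
  | succ d IHd =>
    intro k hkd hk
    have hkn : k ≤ n := by omega
    have hn1 : 1 ≤ n := by omega
    obtain ⟨IH1, IH2⟩ := IHd (k + 1) (by omega) (by omega)
    set A := sPow (gamma G k) (4 ^ (n - k)) with hA
    set N' := sPow (gamma G k) (4 ^ (n - 1 - k)) with hN'
    have hcomp : A ≤ sPow N' 4 := by
      apply sPow_le'
      intro x hx
      have he : n - k = (n - 1 - k) + 1 := by omega
      rw [he, pow_succ, pow_mul]
      exact pow_mem_sPow (pow_mem_sPow hx _) 4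
    have hN'le : N' ≤ Nnk G (n - 1) k := comp_le_Nnk le_rfl (by omega)
    have hprev := (IHn (n - 1) (by omega) d k (by omega) hk).1
    have hn1eq : n - 1 + 1 = n := by omega
    rw [hn1eq] at hprev
    have hN'comm : ⁅N', (⊤ : Subgroup G)⁆ ≤ Nnk G n (k + 1) :=
      (Subgroup.commutator_mono hN'le le_rfl).trans hprev
    have hCk : ⁅A, (⊤ : Subgroup G)⁆ ≤ Nnk G (n + 1) (k + 1) := by
      refine (Subgroup.commutator_mono hcomp le_rfl).trans
        ((comm_sPow_top_le N' 4).trans (sup_le ?_ ?_))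
      · exact (sPow_mono hN'comm 4).trans IH2
      · exact (Subgroup.commutator_mono hN'comm le_top).trans
          (IH1.trans (Nnk_anti (n + 1) (Nat.le_succ (k + 1))))
    have ha : ⁅Nnk G n k, (⊤ : Subgroup G)⁆ ≤ Nnk G (n + 1) (k + 1) := by
      rw [Nnk_decomp hkn]
      exact comm_sup_top_le hCk (IH1.trans (Nnk_anti (n + 1) (Nat.le_succ (k + 1))))
    refine ⟨ha, ?_⟩
    have hdecomp : Nnk G n k = A ⊔ Nnk G n (k + 1) := Nnk_decomp hkn
    have hsub : ⁅Nnk G n k, Nnk G n k⁆ ≤ Nnk G (n + 1) k :=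
      (Subgroup.commutator_mono le_rfl le_top).trans
        (ha.trans (Nnk_anti (n + 1) (Nat.le_succ k)))
    have hA4 : sPow A 4 ≤ Nnk G (n + 1) k := by
      refine (sPow_sPow_le (gamma G k) (4 ^ (n - k)) 4).trans (sup_le ?_ ?_)
      · have he : 4 ^ (n - k) * 4 = 4 ^ (n + 1 - k) := by
          rw [← pow_succ]
          congr 1
          omega
        rw [he]
        exact comp_le_Nnk le_rfl (by omega)
      · refine le_trans ?_ hsub
        apply Subgroup.commutator_mono <;> rw [hdecomp] <;> exact le_sup_left
    calc sPow (Nnk G n k) 4 = sPow (A ⊔ Nnk G n (k + 1)) 4 := by rw [← hdecomp]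
      _ ≤ sPow A 4 ⊔ sPow (Nnk G n (k + 1)) 4 ⊔ ⁅A ⊔ Nnk G n (k + 1), A ⊔ Nnk G n (k + 1)⁆ :=
          sPow_sup_le A (Nnk G n (k + 1)) 4
      _ ≤ Nnk G (n + 1) k := by
          refine sup_le (sup_le hA4 (IH2.trans (Nnk_anti (n + 1) (Nat.le_succ k)))) ?_
          rw [← hdecomp]
          exact hsub

lemma lemF (G : Type*) [Group G] (n k : ℕ) (hk : 1 ≤ k) (hkn : k ≤ n) :
    sPow ⁅Nnk G n k, (⊤ : Subgroup G)⁆ 4 ≤ ⁅Nnk G (n + 1) k, (⊤ : Subgroup G)⁆ := by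
  obtain ⟨ha, hb⟩ := psi G n (n - k) k (by omega) hk
  have hW : ⁅Nnk G n k, (⊤ : Subgroup G)⁆ ≤ Nnk G (n + 1) k :=
    ha.trans (Nnk_anti (n + 1) (Nat.le_succ k))
  set S := {g : G | ∃ g₁ ∈ Nnk G n k, ∃ g₂ ∈ (⊤ : Subgroup G), ⁅g₁, g₂⁆ = g} with hS
  have hSc : ⁅Nnk G n k, (⊤ : Subgroup G)⁆ = Subgroup.closure S :=
    Subgroup.commutator_def _ _
  haveI : (Subgroup.closure S).Normal := by
    rw [← hSc]; infer_instance
  have h := sPow_closure_le S 4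
  rw [← hSc] at h
  refine h.trans (sup_le ((Subgroup.closure_le _).mpr ?_) ?_)
  · rintro _ ⟨_, ⟨a, haN, g, -, rfl⟩, rfl⟩
    refine commEl_pow_right_mem
      (M := ⁅⁅Nnk G n k, (⊤ : Subgroup G)⁆, Nnk G n k⁆)
      (Subgroup.commutator_mono hW le_top) (commEl_xxg_mem haN (Subgroup.mem_top g)) 4 ?_
    exact Subgroup.commutator_mem_commutator (hb (pow_mem_sPow haN 4)) (Subgroup.mem_top g)
  · exact Subgroup.commutator_mono hW (hW.trans le_top)

lemma Dprime (G : Type*) [Group G] :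
    ∀ j v : ℕ, 1 ≤ v →
      sPow (gamma G (v + 1)) (4 ^ (j + 1)) ≤ ⁅Nnk G (v + j + 1) v, (⊤ : Subgroup G)⁆ := by
  intro j
  induction j with
  | zero =>
    intro v hv
    have hg : gamma G (v + 1) = ⁅gamma G v, (⊤ : Subgroup G)⁆ := gamma_succ_eq v hv
    have hγ1 : gamma G (v + 1) ≤ Nnk G (v + 1) v := by
      have h := comp_le_Nnk (G := G) (n := v + 1) (k := v) (i := v + 1) (Nat.le_succ v) le_rfl
      rwa [Nat.sub_self, pow_zero, sPow_one_eq] at h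
    have hγv4 : sPow (gamma G v) 4 ≤ Nnk G (v + 1) v := by
      have h := comp_le_Nnk (G := G) (n := v + 1) (k := v) (i := v) le_rfl (Nat.le_succ v)
      have he : v + 1 - v = 1 := by omega
      rwa [he, pow_one] at h
    set S := {g : G | ∃ g₁ ∈ gamma G v, ∃ g₂ ∈ (⊤ : Subgroup G), ⁅g₁, g₂⁆ = g} with hS
    have hSc : ⁅gamma G v, (⊤ : Subgroup G)⁆ = Subgroup.closure S := Subgroup.commutator_def _ _
    haveI : (Subgroup.closure S).Normal := by rw [← hSc]; infer_instance
    have h := sPow_closure_le S 4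
    rw [← hSc, ← hg] at h
    rw [pow_one]
    refine h.trans (sup_le ((Subgroup.closure_le _).mpr ?_) ?_)
    · rintro _ ⟨_, ⟨x, hx, g, -, rfl⟩, rfl⟩
      refine commEl_pow_right_mem
        (M := ⁅⁅gamma G v, (⊤ : Subgroup G)⁆, gamma G v⁆) ?_
        (commEl_xxg_mem hx (Subgroup.mem_top g)) 4 ?_
      · rw [← hg]
        exact Subgroup.commutator_mono hγ1 le_top
      · exact Subgroup.commutator_mem_commutator (hγv4 (pow_mem_sPow hx 4)) (Subgroup.mem_top g)
    · exact Subgroup.commutator_mono hγ1 (hγ1.trans le_top)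
  | succ j IH =>
    intro v hv
    have step1 : sPow (gamma G (v + 1)) (4 ^ (j + 1 + 1)) ≤
        sPow ⁅Nnk G (v + j + 1) v, (⊤ : Subgroup G)⁆ 4 := by
      have he : 4 ^ (j + 1 + 1) = 4 ^ (j + 1) * 4 := by rw [pow_succ]
      rw [he]
      exact sPow_pow_le 4 (IH v hv)
    refine step1.trans ((lemF G (v + j + 1) v hv (by omega)).trans (le_of_eq ?_))
    congr 1

lemma aGe (G : Type*) [Group G] (n k : ℕ) (hk : 1 ≤ k) (hkn : k ≤ n) :
    Nnk G (n + 1) (k + 1) ≤ ⁅Nnk G n k, (⊤ : Subgroup G)⁆ := by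
  refine iSup₂_le fun i hi => ?_
  obtain ⟨hki, hin⟩ := Finset.mem_Icc.mp hi
  have hγn : gamma G n ≤ Nnk G n k := by
    have h := comp_le_Nnk (G := G) (n := n) (k := k) (i := n) hkn le_rfl
    rwa [Nat.sub_self, pow_zero, sPow_one_eq] at h
  by_cases hcase : i = n + 1
  · subst hcase
    rw [Nat.sub_self, pow_zero, sPow_one_eq, gamma_succ_eq n (by omega)]
    exact Subgroup.commutator_mono hγn le_rfl
  · have hin' : i ≤ n := by omega
    obtain ⟨v, rfl⟩ : ∃ v, i = v + 1 := ⟨i - 1, by omega⟩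
    have hv : 1 ≤ v := by omega
    have hj : n + 1 - (v + 1) = (n - (v + 1)) + 1 := by omega
    rw [hj]
    have h := Dprime G (n - (v + 1)) v hv
    have he : v + (n - (v + 1)) + 1 = n := by omega
    rw [he] at h
    exact h.trans (Subgroup.commutator_mono (Nnk_anti n (by omega)) le_rfl)

lemma powPart (G : Type*) [Group G] :
    ∀ m n k : ℕ, 1 ≤ k → k ≤ n → sPow (Nnk G n k) (4 ^ (m + 1)) ≤ Nnk G (n + (m + 1)) k := by
  intro m
  induction m with
  | zero =>
    intro n k hk hkn
    have h := (psi G n (n - k) k (by omega) hk).2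
    rwa [pow_one]
  | succ m IH =>
    intro n k hk hkn
    have h1 : sPow (Nnk G n k) (4 ^ (m + 1 + 1)) ≤ sPow (Nnk G (n + 1) k) (4 ^ (m + 1)) := by
      have he : 4 ^ (m + 1 + 1) = 4 * 4 ^ (m + 1) := by rw [pow_succ']
      rw [he]
      exact sPow_pow_le (4 ^ (m + 1)) (psi G n (n - k) k (by omega) hk).2
    refine h1.trans ((IH (n + 1) k hk (by omega)).trans (le_of_eq ?_))
    congr 1
    omega

end Main

theorem stmt_0 (G : Type*) [Group G] (n k : ℕ) (hk : 1 ≤ k) (hkn : k ≤ n) :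
    ⁅Nnk G n k, (⊤ : Subgroup G)⁆ = Nnk G (n + 1) (k + 1) ∧
    ∀ m : ℕ, 1 ≤ m → sPow (Nnk G n k) (4 ^ m) ≤ Nnk G (n + m) k := by
  constructor
  · exact le_antisymm (psi G n (n - k) k (by omega) hk).1 (aGe G n k hk hkn)
  · intro m hm
    obtain ⟨m', rfl⟩ : ∃ m', m = m' + 1 := ⟨m - 1, by omega⟩
    exact powPart G m' n k hk hkn
end

section
/- Let G be a group and let m, n be positive integers. Then λ̄_n(G)^{4^m} ≤ λ̄_{n+m}(G) and [λ̄_n(G), λ̄_m(G)] ≤ λ̄_{n+m}(G). -/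
section Aux

variable {G : Type*} [Group G]

open scoped commutatorElement

lemma sPow_le_of_le {H K : Subgroup G} (m : ℕ) (h : H ≤ K) : sPow H m ≤ sPow K m :=
  Subgroup.closure_mono (Set.image_mono h)

lemma sPow_le_self (H : Subgroup G) (m : ℕ) : sPow H m ≤ H := by
  rw [sPow, Subgroup.closure_le]
  rintro x ⟨h, hh, rfl⟩
  exact H.pow_mem hh m

lemma sPow_mul_le (H : Subgroup G) (a b : ℕ) : sPow H (a * b) ≤ sPow (sPow H a) b := by
  rw [sPow, Subgroup.closure_le]
  rintro x ⟨h, hh, rfl⟩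
  show h ^ (a * b) ∈ _
  rw [pow_mul]
  exact Subgroup.subset_closure ⟨h ^ a, Subgroup.subset_closure ⟨h, hh, rfl⟩, rfl⟩

lemma sPow_map {G' : Type*} [Group G'] (f : G →* G') (H : Subgroup G) (m : ℕ) :
    Subgroup.map f (sPow H m) = sPow (Subgroup.map f H) m := by
  rw [sPow, sPow, MonoidHom.map_closure]
  congr 1
  ext x
  constructor
  · rintro ⟨-, ⟨h, hh, rfl⟩, rfl⟩
    exact ⟨f h, ⟨h, hh, rfl⟩, (map_pow f h m).symm⟩
  · rintro ⟨-, ⟨h, hh, rfl⟩, rfl⟩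
    exact ⟨h ^ m, ⟨h, hh, rfl⟩, map_pow f h m⟩

lemma lambdaBar_succ_eq (n : ℕ) (hn : 1 ≤ n) :
    lambdaBar G (n + 1) = sPow (lambdaBar G n) 4 ⊔ ⁅lambdaBar G n, (⊤ : Subgroup G)⁆ := by
  cases n with
  | zero => omega
  | succ k => rfl

lemma lambdaBar_succ_le (n : ℕ) (hn : 1 ≤ n) : lambdaBar G (n + 1) ≤ lambdaBar G n := by
  rw [lambdaBar_succ_eq n hn]
  exact sup_le (sPow_le_self _ _) (Subgroup.commutator_le_left _ _)

lemma lambdaBar_antitone {a b : ℕ} (ha : 1 ≤ a) (hab : a ≤ b) :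
    lambdaBar G b ≤ lambdaBar G a := by
  induction b, hab using Nat.le_induction with
  | base => exact le_rfl
  | succ b hb ih => exact (lambdaBar_succ_le b (ha.trans hb)).trans ih

lemma commutator_pow_right (a b : G) (h : Commute ⁅a, b⁆ b) :
    ∀ k : ℕ, ⁅a, b ^ k⁆ = ⁅a, b⁆ ^ k
  | 0 => by simp
  | (k + 1) => by
    have hk := commutator_pow_right a b h k
    have step : ⁅a, b ^ (k + 1)⁆ = ⁅a, b⁆ * (b * ⁅a, b ^ k⁆ * b⁻¹) := by
      simp only [commutatorElement_def, pow_succ']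
      group
    rw [step, hk, ← (h.pow_left k).eq, mul_inv_cancel_right, ← pow_succ']

lemma lambdaBar_pow_le (G : Type*) [Group G] :
    ∀ m, 1 ≤ m → ∀ n, 1 ≤ n → sPow (lambdaBar G n) (4 ^ m) ≤ lambdaBar G (n + m)
  | 0, hm => by omega
  | 1, _ => fun n hn => by
    rw [pow_one, lambdaBar_succ_eq n hn]; exact le_sup_left
  | (m + 2), _ => fun n hn => by
    have ih := lambdaBar_pow_le G (m + 1) (by omega) n hn
    calc sPow (lambdaBar G n) (4 ^ (m + 2))
        ≤ sPow (sPow (lambdaBar G n) (4 ^ (m + 1))) 4 := by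
          rw [pow_succ]; exact sPow_mul_le _ _ _
      _ ≤ sPow (lambdaBar G (n + (m + 1))) 4 := sPow_le_of_le 4 ih
      _ ≤ lambdaBar G (n + (m + 2)) := by
          rw [show n + (m + 2) = (n + (m + 1)) + 1 by omega,
            lambdaBar_succ_eq (n + (m + 1)) (by omega)]
          exact le_sup_left

lemma lambdaBar_comm_le (G : Type*) [Group G] :
    ∀ m, 1 ≤ m → ∀ n, 1 ≤ n → ⁅lambdaBar G n, lambdaBar G m⁆ ≤ lambdaBar G (n + m)
  | 0, hm => by omega
  | 1, _ => fun n hn => by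
    rw [lambdaBar_succ_eq n hn]
    exact le_sup_right.trans' (Subgroup.commutator_mono le_rfl le_top)
  | (m + 2), _ => fun n hn => by
    have ih : ∀ n', 1 ≤ n' → ⁅lambdaBar G n', lambdaBar G (m + 1)⁆ ≤ lambdaBar G (n' + (m + 1)) :=
      lambdaBar_comm_le G (m + 1) (by omega)
    set N : Subgroup G := lambdaBar G (n + (m + 2)) with hN
    haveI : N.Normal := lambdaBar_normal G _
    set φ : G →* G ⧸ N := QuotientGroup.mk' N with hφ
    have hker : ∀ H : Subgroup G, H ≤ N → Subgroup.map φ H = ⊥ := fun H hH =>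
      (Subgroup.map_eq_bot_iff _).mpr (by rwa [hφ, QuotientGroup.ker_mk'])
    set A := Subgroup.map φ (lambdaBar G n) with hA
    set B := Subgroup.map φ (lambdaBar G (m + 1)) with hB
    set C := Subgroup.map φ (lambdaBar G (n + (m + 1))) with hC
    -- basic commutator facts in the quotient
    have fAB : ⁅A, B⁆ ≤ C := by
      rw [hA, hB, hC, ← Subgroup.map_commutator]
      exact Subgroup.map_mono (ih n hn)
    have fCB : ⁅C, B⁆ = ⊥ := by
      rw [hC, hB, ← Subgroup.map_commutator, ← le_bot_iff]
      refine le_trans (Subgroup.map_mono ?_) (hker N le_rfl).le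
      exact (ih (n + (m + 1)) (by omega)).trans (lambdaBar_antitone (by omega) (by omega))
    have fC4 : ∀ c ∈ C, c ^ 4 = 1 := by
      rintro - ⟨x, hx, rfl⟩
      have hx4 : x ^ 4 ∈ sPow (lambdaBar G (n + (m + 1))) 4 :=
        Subgroup.subset_closure ⟨x, hx, rfl⟩
      have hle : sPow (lambdaBar G (n + (m + 1))) 4 ≤ N := by
        rw [hN, show n + (m + 2) = (n + (m + 1)) + 1 by omega,
          lambdaBar_succ_eq (n + (m + 1)) (by omega)]
        exact le_sup_left
      have hmem : x ^ 4 ∈ N := hle hx4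
      rw [← map_pow]
      simpa [hφ] using (QuotientGroup.eq_one_iff _).mpr hmem
    -- three subgroups lemma part
    have fBT : ⁅⁅B, (⊤ : Subgroup (G ⧸ N))⁆, A⁆ = ⊥ := by
      refine Subgroup.commutator_commutator_eq_bot_of_rotate ?_ ?_
      · -- ⁅⁅⊤, A⁆, B⁆ = ⊥
        rw [← le_bot_iff]
        have h1 : ⁅(⊤ : Subgroup (G ⧸ N)), A⁆ ≤ Subgroup.map φ (lambdaBar G (n + 1)) := by
          rw [Subgroup.commutator_comm, hA,
            ← Subgroup.map_top_of_surjective φ (QuotientGroup.mk'_surjective N),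
            ← Subgroup.map_commutator]
          refine Subgroup.map_mono ?_
          rw [lambdaBar_succ_eq n hn]; exact le_sup_right
        refine le_trans (Subgroup.commutator_mono h1 le_rfl) ?_
        rw [hB, ← Subgroup.map_commutator, ← hker N le_rfl]
        refine Subgroup.map_mono ((ih (n + 1) (by omega)).trans ?_)
        rw [hN, show n + 1 + (m + 1) = n + (m + 2) by omega]
      · -- ⁅⁅A, B⁆, ⊤⁆ = ⊥
        rw [← le_bot_iff]
        refine le_trans (Subgroup.commutator_mono fAB le_rfl) ?_
        rw [hC, ← Subgroup.map_top_of_surjective φ (QuotientGroup.mk'_surjective N),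
          ← Subgroup.map_commutator, ← hker N le_rfl]
        refine Subgroup.map_mono ?_
        rw [hN, show n + (m + 2) = (n + (m + 1)) + 1 by omega,
          lambdaBar_succ_eq (n + (m + 1)) (by omega)]
        exact le_sup_right
    -- the fourth-powers part
    have fP : ⁅sPow B 4, A⁆ = ⊥ := by
      rw [Subgroup.commutator_eq_bot_iff_le_centralizer, sPow, Subgroup.closure_le]
      rintro - ⟨b, hb, rfl⟩
      rw [SetLike.mem_coe, Subgroup.mem_centralizer_iff_commutator_eq_one]
      intro a ha
      have hab : ⁅a, b⁆ ∈ C := fAB (Subgroup.commutator_mem_commutator ha hb)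
      have hcomm : Commute ⁅a, b⁆ b := by
        rw [← commutatorElement_eq_one_iff_commute, ← Subgroup.mem_bot, ← fCB]
        exact Subgroup.commutator_mem_commutator hab hb
      show ⁅a, b ^ 4⁆ = 1
      rw [commutator_pow_right a b hcomm 4, fC4 _ hab]
    -- put it together
    have key : Subgroup.map φ ⁅lambdaBar G n, lambdaBar G (m + 2)⁆ = ⊥ := by
      rw [Subgroup.map_commutator, ← hA]
      have hmap : Subgroup.map φ (lambdaBar G (m + 2)) ≤
          sPow B 4 ⊔ ⁅B, (⊤ : Subgroup (G ⧸ N))⁆ := by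
        rw [lambdaBar_succ_eq (G := G) (m + 1) (by omega), Subgroup.map_sup, sPow_map, ← hB,
          Subgroup.map_commutator]
        exact sup_le_sup le_rfl (Subgroup.commutator_mono le_rfl le_top)
      rw [← le_bot_iff, Subgroup.commutator_comm]
      refine le_trans (Subgroup.commutator_mono hmap le_rfl) ?_
      rw [le_bot_iff, Subgroup.commutator_eq_bot_iff_le_centralizer]
      rw [Subgroup.commutator_eq_bot_iff_le_centralizer] at fP
      refine sup_le fP ?_
      rw [← Subgroup.commutator_eq_bot_iff_le_centralizer]
      exact fBT
    have h := (Subgroup.map_eq_bot_iff _).mp key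
    rwa [hφ, QuotientGroup.ker_mk'] at h

end Aux

theorem stmt_6 (G : Type*) [Group G] (m n : ℕ) (hm : 1 ≤ m) (hn : 1 ≤ n) :
    sPow (lambdaBar G n) (4 ^ m) ≤ lambdaBar G (n + m) ∧
    ⁅lambdaBar G n, lambdaBar G m⁆ ≤ lambdaBar G (n + m) := by
  exact ⟨lambdaBar_pow_le G m hm n hn, lambdaBar_comm_le G m hm n hn⟩
end

section
/- Let n ≥ 1 and r ≥ 2 be integers, and let G be a finite 2-central group (i.e. a finite 2-group with Ω_2(G) ≤ Z(G)) which can be generated by r elements and whose exponent divides 2^n. Then G is a homomorphic image of ^mG_r where m = ⌈n/2⌉ + 1; that is, there exists a surjective group homomorphism from F_r/λ̄_{⌈n/2⌉+2}(F_r) onto G. -/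
open scoped commutatorElement

private lemma pow_one_of_dvd_pow {G : Type*} [Group G] {x : G} {a b : ℕ}
    (h : x ^ a = 1) (hab : a ∣ b) : x ^ b = 1 := by
  obtain ⟨c, rfl⟩ := hab; rw [pow_mul, h, one_pow]

private lemma exists_order_two {G : Type*} [Group G] :
    ∀ (k : ℕ) (x : G), x ≠ 1 → x ^ 2 ^ k = 1 → ∃ y : G, y ≠ 1 ∧ y ^ 2 = 1
  | 0, x, hx, h1 => absurd (by simpa using h1) hx
  | (k+1), x, hx, h1 => by
    by_cases h : x ^ 2 ^ k = 1
    · exact exists_order_two k x hx h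
    · exact ⟨x ^ 2 ^ k, h, by rw [← pow_mul, ← pow_succ]; exact h1⟩

private lemma sq_eq_one_of_conj_inv {G : Type*} [Group G]
    (hc : ∀ x : G, x ^ 4 = 1 → ∀ g : G, Commute x g) (h c : G)
    (hconj : h * c * h⁻¹ = c⁻¹) :
    ∀ s : ℕ, c ^ 2 ^ s = 1 → c ^ 2 = 1 := by
  intro s
  induction s with
  | zero => intro h1; rw [pow_zero, pow_one] at h1; rw [h1, one_pow]
  | succ s ih =>
    intro h1
    cases s with
    | zero => simpa using h1
    | succ t =>
      apply ih
      have hd4 : (c ^ 2 ^ t) ^ 4 = 1 := by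
        rw [← pow_mul]
        have : 2 ^ t * 4 = 2 ^ (t + 2) := by rw [pow_add]; ring
        rw [this]; exact h1
      have hcomm : Commute (c ^ 2 ^ t) h := hc _ hd4 h
      have h2 : h * c ^ 2 ^ t * h⁻¹ = (c ^ 2 ^ t)⁻¹ := by
        rw [← conj_pow, hconj, inv_pow]
      have h3 : h * c ^ 2 ^ t * h⁻¹ = c ^ 2 ^ t := by
        rw [← hcomm.eq]; group
      have hdd : c ^ 2 ^ t = (c ^ 2 ^ t)⁻¹ := h3.symm.trans h2
      have h4 : (c ^ 2 ^ t) ^ 2 = 1 := by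
        rw [pow_two]
        nth_rewrite 1 [hdd]
        simp
      rw [← pow_mul, ← pow_succ] at h4
      exact h4

private lemma comm_sq_one {G : Type*} [Group G]
    (hp : IsPGroup 2 G)
    (hc : ∀ x : G, x ^ 4 = 1 → ∀ g : G, Commute x g)
    (h g : G) (h8 : h ^ 8 = 1) : ⁅h, g⁆ ^ 2 = 1 := by
  have hsq : Commute (h ^ 2) g := by
    refine hc (h ^ 2) ?_ g
    rw [← pow_mul]; exact h8
  have h1 : ⁅h ^ 2, g⁆ = 1 := commutatorElement_eq_one_iff_commute.mpr hsq
  have h2 : (h * ⁅h, g⁆ * h⁻¹) * ⁅h, g⁆ = ⁅h ^ 2, g⁆ := by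
    simp only [commutatorElement_def, pow_two]; group
  rw [h1] at h2
  have hconj : h * ⁅h, g⁆ * h⁻¹ = ⁅h, g⁆⁻¹ := eq_inv_of_mul_eq_one_left h2
  obtain ⟨s, hs⟩ := hp ⁅h, g⁆
  exact sq_eq_one_of_conj_inv hc h ⁅h, g⁆ hconj s hs

private lemma key_lemma : ∀ (N : ℕ) (G : Type*) [Group G] [Finite G],
    Nat.card G ≤ N →
    IsPGroup 2 G → (∀ x : G, x ^ 4 = 1 → ∀ g : G, Commute x g) →
    ∀ e : ℕ,
      (∀ x y : G, x ^ 2 ^ e = 1 → y ^ 2 ^ e = 1 → (x * y) ^ 2 ^ e = 1) ∧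
      (∀ h g : G, h ^ 2 ^ e = 1 → ⁅h, g⁆ ^ 2 ^ (e - 2) = 1) := by
  intro N
  induction N with
  | zero =>
    intro G _ _ hcard
    exact absurd hcard (by have := Nat.card_pos (α := G); omega)
  | succ N ih =>
    intro G _ _ hcard hp hc e
    rcases Nat.lt_or_ge e 3 with he | he
    · constructor
      · intro x y hx hy
        have hdvd : (2 : ℕ) ^ e ∣ 4 := by
          have h4 : (4 : ℕ) = 2 ^ 2 := by norm_num
          rw [h4]; exact pow_dvd_pow 2 (by omega)
        have hx4 : x ^ 4 = 1 := pow_one_of_dvd_pow hx hdvd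
        rw [(hc x hx4 y).mul_pow, hx, hy, one_mul]
      · intro h g hh
        have hdvd : (2 : ℕ) ^ e ∣ 4 := by
          have h4 : (4 : ℕ) = 2 ^ 2 := by norm_num
          rw [h4]; exact pow_dvd_pow 2 (by omega)
        have h4 : h ^ 4 = 1 := pow_one_of_dvd_pow hh hdvd
        rw [commutatorElement_eq_one_iff_commute.mpr (hc h h4 g), one_pow]
    · obtain ⟨m, rfl⟩ : ∃ m, e = m + 3 := ⟨e - 3, by omega⟩
      rcases subsingleton_or_nontrivial G with hsub | hnt
      · constructor
        · intro x y _ _; exact Subsingleton.elim _ _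
        · intro h g _; exact Subsingleton.elim _ _
      · -- the subgroup of elements of order dividing 2
        have hmulZ : ∀ a b : G, a ^ 2 = 1 → b ^ 2 = 1 → (a * b) ^ 2 = 1 := by
          intro a b ha hb
          have ha4 : a ^ 4 = 1 := by
            have : (4 : ℕ) = 2 * 2 := by norm_num
            rw [this, pow_mul, ha, one_pow]
          rw [(hc a ha4 b).mul_pow, ha, hb, one_mul]
        let Z1 : Subgroup G :=
          { carrier := {x : G | x ^ 2 = 1}
            one_mem' := one_pow 2
            mul_mem' := fun ha hb => hmulZ _ _ ha hb
            inv_mem' := fun ha => by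
              show _ ^ 2 = 1
              rw [inv_pow, ha, inv_one] }
        haveI hZ1n : Z1.Normal := by
          constructor
          intro a ha g
          show (g * a * g⁻¹) ^ 2 = 1
          have ha2 : a ^ 2 = 1 := ha
          rw [conj_pow, ha2, mul_one, mul_inv_cancel]
        -- Z1 is nontrivial
        obtain ⟨x0, hx0⟩ := exists_ne (1 : G)
        obtain ⟨k0, hk0⟩ := hp x0
        obtain ⟨y0, hy0ne, hy0sq⟩ := exists_order_two k0 x0 hx0 hk0
        have hZ1nt : Nontrivial Z1 := by
          refine ⟨⟨y0, hy0sq⟩, 1, ?_⟩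
          intro hcon
          exact hy0ne (congrArg Subtype.val hcon)
        have hZ1card : 2 ≤ Nat.card Z1 := Finite.one_lt_card_iff_nontrivial.mpr hZ1nt
        have hGeq : Nat.card G = Nat.card (G ⧸ Z1) * Nat.card Z1 :=
          Subgroup.card_eq_card_quotient_mul_card_subgroup Z1
        have hQpos : 0 < Nat.card (G ⧸ Z1) := Nat.card_pos
        have hmul : Nat.card (G ⧸ Z1) * 2 ≤ Nat.card (G ⧸ Z1) * Nat.card Z1 :=
          Nat.mul_le_mul_left _ hZ1card
        have hQcard : Nat.card (G ⧸ Z1) ≤ N := by omega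
        haveI : Finite (G ⧸ Z1) := Quotient.finite _
        have hpQ : IsPGroup 2 (G ⧸ Z1) := hp.to_quotient Z1
        set π := QuotientGroup.mk' Z1 with hπ
        have hcQ : ∀ x : G ⧸ Z1, x ^ 4 = 1 → ∀ g : G ⧸ Z1, Commute x g := by
          intro xb hx4 gb
          obtain ⟨x, rfl⟩ := QuotientGroup.mk'_surjective Z1 xb
          obtain ⟨g, rfl⟩ := QuotientGroup.mk'_surjective Z1 gb
          rw [← map_pow] at hx4
          have hmem : x ^ 4 ∈ Z1 := (QuotientGroup.eq_one_iff _).mp hx4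
          have hx8 : x ^ 8 = 1 := by
            have h84 : (8 : ℕ) = 4 * 2 := by norm_num
            rw [h84, pow_mul]
            exact hmem
          have hc2 : ⁅x, g⁆ ^ 2 = 1 := comm_sq_one hp hc x g hx8
          have : ⁅π x, π g⁆ = 1 := by
            rw [← map_commutatorElement]
            exact (QuotientGroup.eq_one_iff _).mpr hc2
          exact commutatorElement_eq_one_iff_commute.mp this
        obtain ⟨P1, P2⟩ := ih (G ⧸ Z1) hQcard hpQ hcQ (m + 2)
        have hπpow : ∀ z : G, z ^ 2 ^ (m + 3) = 1 → π z ^ 2 ^ (m + 2) = 1 := by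
          intro z hz
          rw [← map_pow]
          refine (QuotientGroup.eq_one_iff _).mpr ?_
          show (z ^ 2 ^ (m + 2)) ^ 2 = 1
          rw [← pow_mul, ← pow_succ]
          exact hz
        constructor
        · intro x y hx hy
          have hxy := P1 _ _ (hπpow x hx) (hπpow y hy)
          rw [← map_mul, ← map_pow] at hxy
          have hmem : (x * y) ^ 2 ^ (m + 2) ∈ Z1 := (QuotientGroup.eq_one_iff _).mp hxy
          have : ((x * y) ^ 2 ^ (m + 2)) ^ 2 = 1 := hmem
          rw [← pow_mul, ← pow_succ] at this
          exact this
        · intro h g hh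
          have hcomm := P2 (π h) (π g) (hπpow h hh)
          rw [← map_commutatorElement, ← map_pow, Nat.add_sub_cancel] at hcomm
          have hmem : ⁅h, g⁆ ^ 2 ^ m ∈ Z1 := (QuotientGroup.eq_one_iff _).mp hcomm
          have h2 : (⁅h, g⁆ ^ 2 ^ m) ^ 2 = 1 := hmem
          rw [← pow_mul, ← pow_succ] at h2
          have hidx : m + 3 - 2 = m + 1 := by omega
          rw [hidx]
          exact h2

private lemma pow4_lemma {G : Type*} [Group G] (x : G) :
    ∀ e : ℕ, x ^ 2 ^ e = 1 → (x ^ 4) ^ 2 ^ (e - 2) = 1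
  | 0, h => by
    rw [pow_zero, pow_one] at h
    simp [h]
  | 1, h => by
    rw [pow_one] at h
    have h4 : x ^ 4 = 1 := by
      have : (4 : ℕ) = 2 * 2 := by norm_num
      rw [this, pow_mul, h, one_pow]
    simp [h4]
  | (e+2), h => by
    rw [← pow_mul, Nat.add_sub_cancel]
    have : 4 * 2 ^ e = 2 ^ (e + 2) := by rw [pow_add]; ring
    rw [this]
    exact h

private lemma map_lambdaBar_le {F G : Type*} [Group F] [Group G] (φ : F →* G) :
    ∀ k, Subgroup.map φ (lambdaBar F k) ≤ lambdaBar G k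
  | 0 => le_top
  | 1 => le_top
  | (k+2) => by
    have ihm := map_lambdaBar_le φ (k+1)
    show Subgroup.map φ (sPow (lambdaBar F (k+1)) 4 ⊔ ⁅lambdaBar F (k+1), (⊤ : Subgroup F)⁆) ≤
      sPow (lambdaBar G (k+1)) 4 ⊔ ⁅lambdaBar G (k+1), (⊤ : Subgroup G)⁆
    rw [Subgroup.map_sup]
    apply sup_le
    · apply le_sup_of_le_left
      show Subgroup.map φ (Subgroup.closure _) ≤ sPow (lambdaBar G (k+1)) 4
      rw [MonoidHom.map_closure]
      apply Subgroup.closure_mono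
      rintro _ ⟨_, ⟨h, hh, rfl⟩, rfl⟩
      exact ⟨φ h, ihm (Subgroup.mem_map_of_mem φ hh), (map_pow φ h 4).symm⟩
    · apply le_sup_of_le_right
      rw [Subgroup.map_commutator]
      exact Subgroup.commutator_mono ihm le_top

theorem stmt_13 (n r : ℕ) (hn : 1 ≤ n) (hr : 2 ≤ r)
    (G : Type*) [Group G] [Finite G] (hpg : IsPGroup 2 G)
    (hcent : Omega G 2 2 ≤ Subgroup.center G)
    (hgen : ∃ S : Finset G, S.card ≤ r ∧ Subgroup.closure (S : Set G) = ⊤)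
    (hexp : Monoid.exponent G ∣ 2 ^ n) :
    ∃ f : (FreeGroup (Fin r) ⧸ lambdaBar (FreeGroup (Fin r)) ((n + 1) / 2 + 2)) →* G,
      Function.Surjective f := by
  classical
  obtain ⟨S, hScard, hSgen⟩ := hgen
  have hc : ∀ x : G, x ^ 4 = 1 → ∀ g : G, Commute x g := by
    intro x hx g
    have hxc : x ∈ Subgroup.center G :=
      hcent (Subgroup.subset_closure (show x ^ 2 ^ 2 = 1 by simpa using hx))
    exact (Subgroup.mem_center_iff.mp hxc g).symm
  have key := key_lemma (Nat.card G) G le_rfl hpg hc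
  let Se : ℕ → Subgroup G := fun e =>
    { carrier := {x : G | x ^ 2 ^ e = 1}
      one_mem' := one_pow _
      mul_mem' := fun ha hb => (key e).1 _ _ ha hb
      inv_mem' := fun ha => by
        show _ ^ 2 ^ _ = 1
        rw [inv_pow, ha, inv_one] }
  have hlam : ∀ k, lambdaBar G (k + 1) ≤ Se (n - 2 * k) := by
    intro k
    induction k with
    | zero =>
      intro x _
      show x ^ 2 ^ (n - 2 * 0) = 1
      obtain ⟨c, hcd⟩ := hexp
      rw [Nat.mul_zero, Nat.sub_zero, hcd, pow_mul, Monoid.pow_exponent_eq_one, one_pow]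
    | succ k ihk =>
      show sPow (lambdaBar G (k+1)) 4 ⊔ ⁅lambdaBar G (k+1), (⊤ : Subgroup G)⁆ ≤
        Se (n - 2 * (k + 1))
      have hidx : n - 2 * (k + 1) = (n - 2 * k) - 2 := by omega
      rw [hidx]
      apply sup_le
      · show Subgroup.closure _ ≤ Se ((n - 2 * k) - 2)
        rw [Subgroup.closure_le]
        rintro _ ⟨h, hh, rfl⟩
        exact pow4_lemma h _ (ihk hh)
      · rw [Subgroup.commutator_le]
        intro h hh g _
        exact (key (n - 2 * k)).2 h g (ihk hh)
  have hbot : ∀ x : G, x ∈ lambdaBar G ((n + 1) / 2 + 2) → x = 1 := by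
    intro x hx
    have h0 : n - 2 * ((n + 1) / 2 + 1) = 0 := by omega
    have hmem : x ^ 2 ^ (n - 2 * ((n + 1) / 2 + 1)) = 1 := hlam ((n + 1) / 2 + 1) hx
    rw [h0, pow_zero, pow_one] at hmem
    exact hmem
  -- build the surjection from the free group
  let l := S.toList
  have hlen : l.length ≤ r := by
    show S.toList.length ≤ r
    rw [Finset.length_toList]; exact hScard
  let ν : Fin r → G := fun i => l.getD i 1
  have hSsub : (S : Set G) ⊆ Set.range ν := by
    intro s hs
    obtain ⟨i, hi, hgi⟩ := List.getElem_of_mem (Finset.mem_toList.mpr hs)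
    refine ⟨⟨i, lt_of_lt_of_le hi hlen⟩, ?_⟩
    show l.getD i 1 = s
    rw [List.getD_eq_getElem l 1 hi]
    exact hgi
  let φ : FreeGroup (Fin r) →* G := FreeGroup.lift ν
  have hφsurj : Function.Surjective φ := by
    rw [← MonoidHom.range_eq_top]
    show (FreeGroup.lift ν).range = ⊤
    rw [FreeGroup.range_lift_eq_closure]
    refine eq_top_iff.mpr ?_
    rw [← hSgen]
    exact Subgroup.closure_mono hSsub
  have hker : lambdaBar (FreeGroup (Fin r)) ((n + 1) / 2 + 2) ≤ φ.ker := by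
    intro x hx
    have h1 : φ x ∈ Subgroup.map φ (lambdaBar (FreeGroup (Fin r)) ((n + 1) / 2 + 2)) :=
      Subgroup.mem_map_of_mem φ hx
    have h2 := map_lambdaBar_le φ ((n + 1) / 2 + 2) h1
    exact hbot _ h2
  refine ⟨QuotientGroup.lift _ φ hker, ?_⟩
  intro g
  obtain ⟨x, hx⟩ := hφsurj g
  exact ⟨QuotientGroup.mk x, by simpa using hx⟩
end

section
/- Let p be a prime and let G be a finite p-central group. Let F be a free group of finite rank, let π : F → G be a surjective group homomorphism, and let R = ker π. Then the exponent of the quotient group (γ_2(F) ∩ R)/[F, R] — which by Hopf's formula is the Schur multiplier M(G) — divides the exponent of G. -/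
open scoped commutatorElement

section SchurAux

open Subgroup

/-- Collection formula: if `z` is central and `b * a = a * b * z`, then
`(a*b)^n = a^n * b^n * z^(n choose 2)`. -/
lemma central_collect {Γ : Type*} [Group Γ] {a b z : Γ} (hz : ∀ w : Γ, Commute z w)
    (h : b * a = a * b * z) : ∀ n : ℕ, (a * b) ^ n = a ^ n * b ^ n * z ^ n.choose 2 := by
  have hb : ∀ n : ℕ, b ^ n * a = a * b ^ n * z ^ n := by
    intro n
    induction n with
    | zero => simp
    | succ n ih =>
      calc b ^ (n + 1) * a = b * (b ^ n * a) := by rw [pow_succ']; simp [mul_assoc]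
        _ = b * (a * b ^ n * z ^ n) := by rw [ih]
        _ = (b * a) * (b ^ n * z ^ n) := by simp [mul_assoc]
        _ = (a * b * z) * (b ^ n * z ^ n) := by rw [h]
        _ = a * b * ((z * b ^ n) * z ^ n) := by simp [mul_assoc]
        _ = a * b * ((b ^ n * z) * z ^ n) := by rw [(hz (b ^ n)).eq]
        _ = a * b ^ (n + 1) * z ^ (n + 1) := by rw [pow_succ' b, pow_succ' z]; simp [mul_assoc]
  intro n
  induction n with
  | zero => simp
  | succ n ih =>
    have hch : (n + 1).choose 2 = n.choose 2 + n := by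
      rw [Nat.choose_succ_succ, Nat.choose_one_right, Nat.add_comm]
    have hzc : ∀ (k : ℕ) (w : Γ), z ^ k * w = w * z ^ k := fun k w => ((hz w).pow_left k).eq
    calc (a * b) ^ (n + 1) = (a * b) ^ n * (a * b) := pow_succ _ _
      _ = a ^ n * b ^ n * (z ^ n.choose 2 * a) * b := by rw [ih]; simp [mul_assoc]
      _ = a ^ n * b ^ n * (a * z ^ n.choose 2) * b := by rw [hzc (n.choose 2) a]
      _ = a ^ n * (b ^ n * a) * (z ^ n.choose 2 * b) := by simp [mul_assoc]
      _ = a ^ n * (b ^ n * a) * (b * z ^ n.choose 2) := by rw [hzc (n.choose 2) b]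
      _ = a ^ n * (a * b ^ n * z ^ n) * (b * z ^ n.choose 2) := by rw [hb]
      _ = (a ^ n * a) * (b ^ n * (z ^ n * b)) * z ^ n.choose 2 := by simp [mul_assoc]
      _ = (a ^ n * a) * (b ^ n * (b * z ^ n)) * z ^ n.choose 2 := by rw [hzc n b]
      _ = (a ^ n * a) * ((b ^ n * b) * (z ^ n * z ^ n.choose 2)) := by simp [mul_assoc]
      _ = a ^ (n + 1) * b ^ (n + 1) * z ^ ((n + 1).choose 2) := by
          rw [← pow_succ a, ← pow_succ b, hch, Nat.add_comm (n.choose 2) n, pow_add]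
          simp [mul_assoc, pow_add]

/-- A nilpotent group generated by one element together with its commutator
subgroup is abelian. -/
lemma cyclic_mod_comm_commute {H : Type*} [Group H] (hnil : Group.IsNilpotent H) (a : H)
    (hgen : (⊤ : Subgroup H) = Subgroup.closure {a} ⊔ Subgroup.lowerCentralSeries (⊤ : Subgroup H) 1) :
    ∀ u v : H, Commute u v := by
  have key : Subgroup.lowerCentralSeries (⊤ : Subgroup H) 1 ≤ Subgroup.lowerCentralSeries (⊤ : Subgroup H) 2 := by
    have h1 : Subgroup.lowerCentralSeries (⊤ : Subgroup H) 1 = ⁅(⊤ : Subgroup H), (⊤ : Subgroup H)⁆ := rfl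
    rw [h1, Subgroup.commutator_le]
    intro u _ v _
    have hmk : ∀ w : H, w ∈ Subgroup.lowerCentralSeries (⊤ : Subgroup H) 1 →
        ∀ t : H ⧸ Subgroup.lowerCentralSeries (⊤ : Subgroup H) 2, Commute ((w : H ⧸ Subgroup.lowerCentralSeries (⊤ : Subgroup H) 2)) t := by
      intro w hw t
      obtain ⟨t₀, rfl⟩ := QuotientGroup.mk_surjective t
      have hmem : ⁅w, t₀⁆ ∈ Subgroup.lowerCentralSeries (⊤ : Subgroup H) 2 := by
        rw [show (2 : ℕ) = 1 + 1 from rfl, Subgroup.lowerCentralSeries_succ]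
        exact Subgroup.commutator_mem_commutator hw (Subgroup.mem_top t₀)
      have h0 : ((⁅w, t₀⁆ : H) : H ⧸ Subgroup.lowerCentralSeries (⊤ : Subgroup H) 2) = 1 :=
        (QuotientGroup.eq_one_iff _).mpr hmem
      have h2 := map_commutatorElement (QuotientGroup.mk' (Subgroup.lowerCentralSeries (⊤ : Subgroup H) 2)) w t₀
      simp only [QuotientGroup.mk'_apply] at h2
      rw [h2] at h0
      exact commutatorElement_eq_one_iff_commute.mp h0
    suffices hc : Commute ((u : H ⧸ Subgroup.lowerCentralSeries (⊤ : Subgroup H) 2)) ((v : H ⧸ Subgroup.lowerCentralSeries (⊤ : Subgroup H) 2)) by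
      have h2 := map_commutatorElement (QuotientGroup.mk' (Subgroup.lowerCentralSeries (⊤ : Subgroup H) 2)) u v
      simp only [QuotientGroup.mk'_apply] at h2
      have : ((⁅u, v⁆ : H) : H ⧸ Subgroup.lowerCentralSeries (⊤ : Subgroup H) 2) = 1 := by
        rw [h2]; exact commutatorElement_eq_one_iff_commute.mpr hc
      exact (QuotientGroup.eq_one_iff _).mp this
    have hdecomp : ∀ x : H, ∃ (i : ℤ) (w : H), w ∈ Subgroup.lowerCentralSeries (⊤ : Subgroup H) 1 ∧ a ^ i * w = x := by
      intro x
      have hx : x ∈ ((Subgroup.closure {a} ⊔ Subgroup.lowerCentralSeries (⊤ : Subgroup H) 1 : Subgroup H) : Set H) := by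
        rw [← hgen]; trivial
      rw [Subgroup.mul_normal] at hx
      obtain ⟨s, hs, w, hw, hswx⟩ := hx
      obtain ⟨i, rfl⟩ := Subgroup.mem_closure_singleton.mp hs
      exact ⟨i, w, hw, hswx⟩
    obtain ⟨i, w, hw, rfl⟩ := hdecomp u
    obtain ⟨j, w', hw', rfl⟩ := hdecomp v
    have hmku : ((a ^ i * w : H) : H ⧸ Subgroup.lowerCentralSeries (⊤ : Subgroup H) 2)
        = ((a : H ⧸ Subgroup.lowerCentralSeries (⊤ : Subgroup H) 2)) ^ i * ((w : H ⧸ Subgroup.lowerCentralSeries (⊤ : Subgroup H) 2)) := by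
      push_cast; rfl
    have hmkv : ((a ^ j * w' : H) : H ⧸ Subgroup.lowerCentralSeries (⊤ : Subgroup H) 2)
        = ((a : H ⧸ Subgroup.lowerCentralSeries (⊤ : Subgroup H) 2)) ^ j * ((w' : H ⧸ Subgroup.lowerCentralSeries (⊤ : Subgroup H) 2)) := by
      push_cast; rfl
    rw [hmku, hmkv]
    exact Commute.mul_left
      (Commute.mul_right ((Commute.refl _).zpow_zpow i j) ((hmk w' hw' _).symm))
      (Commute.mul_right (hmk w hw _) (hmk w hw _))
  have mono : ∀ m : ℕ, Subgroup.lowerCentralSeries (⊤ : Subgroup H) 1 ≤ Subgroup.lowerCentralSeries (⊤ : Subgroup H) (m + 1) := by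
    intro m
    induction m with
    | zero => exact le_rfl
    | succ m ih =>
      refine key.trans ?_
      rw [show (2 : ℕ) = 1 + 1 from rfl, Subgroup.lowerCentralSeries_succ, Subgroup.lowerCentralSeries_succ]
      exact Subgroup.commutator_mono ih le_rfl
  obtain ⟨n, hn⟩ := Subgroup.nilpotent_iff_lowerCentralSeries.mp hnil
  have hbot : Subgroup.lowerCentralSeries (⊤ : Subgroup H) 1 = ⊥ := by
    cases n with
    | zero =>
      have htop : (⊤ : Subgroup H) = ⊥ := by rw [← Subgroup.lowerCentralSeries_zero (⊤ : Subgroup H)]; exact hn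
      exact le_bot_iff.mp (htop ▸ le_top)
    | succ m => exact le_bot_iff.mp (hn ▸ mono m)
  intro u v
  have hm : ⁅u, v⁆ ∈ Subgroup.lowerCentralSeries (⊤ : Subgroup H) 1 :=
    Subgroup.commutator_mem_commutator (Subgroup.mem_top u) (Subgroup.mem_top v)
  rw [hbot] at hm
  exact commutatorElement_eq_one_iff_commute.mp (Subgroup.mem_bot.mp hm)

/-- Either `x` and `g` commute, or the subgroup generated by `g*x*g⁻¹` and `x⁻¹`
is strictly smaller than the one generated by `x` and `g`. -/
lemma smaller_pair {p : ℕ} [Fact p.Prime] {G : Type*} [Group G] [Finite G]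
    (hpg : IsPGroup p G) (x g : G) :
    Commute x g ∨
      Nat.card (Subgroup.closure ({g * x * g⁻¹, x⁻¹} : Set G)) <
        Nat.card (Subgroup.closure ({x, g} : Set G)) := by
  set Hs := Subgroup.closure ({x, g} : Set G) with hHs
  have hx : x ∈ Hs := Subgroup.subset_closure (by simp)
  have hg : g ∈ Hs := Subgroup.subset_closure (by simp)
  set M := Subgroup.closure ({x} : Set G) ⊔ ⁅Hs, Hs⁆ with hM
  have hM1 : Subgroup.closure ({x} : Set G) ≤ Hs := by
    rw [Subgroup.closure_le]; simpa using hx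
  have hM2 : ⁅Hs, Hs⁆ ≤ Hs := Subgroup.commutator_le.mpr fun a ha b hb =>
    Hs.mul_mem (Hs.mul_mem (Hs.mul_mem ha hb) (Hs.inv_mem ha)) (Hs.inv_mem hb)
  have hMle : M ≤ Hs := sup_le hM1 hM2
  by_cases hcase : M = Hs
  · left
    have hnil : Group.IsNilpotent ↥Hs := (hpg.to_subgroup Hs).isNilpotent
    have hgen : (⊤ : Subgroup ↥Hs) = Subgroup.closure {(⟨x, hx⟩ : ↥Hs)} ⊔
        Subgroup.lowerCentralSeries (⊤ : Subgroup ↥Hs) 1 := by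
      apply Subgroup.map_injective Hs.subtype_injective
      rw [Subgroup.map_sup, MonoidHom.map_closure]
      have htop : Subgroup.map Hs.subtype ⊤ = Hs := by
        rw [← MonoidHom.range_eq_map, Hs.range_subtype]
      have hlcs : Subgroup.map Hs.subtype (Subgroup.lowerCentralSeries (⊤ : Subgroup ↥Hs) 1) = ⁅Hs, Hs⁆ := by
        rw [show Subgroup.lowerCentralSeries (⊤ : Subgroup ↥Hs) 1 = ⁅(⊤ : Subgroup ↥Hs), ⊤⁆ from rfl,
          Subgroup.map_commutator, htop]
      rw [htop, hlcs, Set.image_singleton]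
      exact hcase.symm
    have hcomm := cyclic_mod_comm_commute hnil ⟨x, hx⟩ hgen ⟨x, hx⟩ ⟨g, hg⟩
    have := congrArg (Subtype.val) hcomm
    exact this
  · right
    have hlt : M < Hs := lt_of_le_of_ne hMle hcase
    have hyM : g * x * g⁻¹ ∈ M := by
      have hco : ⁅g, x⁆ ∈ M := le_sup_right (α := Subgroup G)
        (Subgroup.commutator_mem_commutator hg hx)
      have hxM : x ∈ M := le_sup_left (α := Subgroup G)
        (Subgroup.subset_closure (Set.mem_singleton x))
      have : g * x * g⁻¹ = ⁅g, x⁆ * x := by group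
      rw [this]; exact M.mul_mem hco hxM
    have hxiM : x⁻¹ ∈ M :=
      M.inv_mem (le_sup_left (α := Subgroup G) (Subgroup.subset_closure (Set.mem_singleton x)))
    have hsub : Subgroup.closure ({g * x * g⁻¹, x⁻¹} : Set G) ≤ M := by
      rw [Subgroup.closure_le]
      rintro t (rfl | rfl)
      · exact hyM
      · exact hxiM
    have h1 : Nat.card (Subgroup.closure ({g * x * g⁻¹, x⁻¹} : Set G)) ≤ Nat.card M :=
      Subgroup.card_le_of_le hsub
    have h2 : Nat.card M < Nat.card Hs := by
      have hss : (M : Set G) ⊂ (Hs : Set G) := SetLike.coe_ssubset_coe.mpr hlt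
      have hfin : (Hs : Set G).Finite := Set.toFinite _
      have := Set.ncard_lt_ncard hss hfin
      rwa [← Nat.card_coe_set_eq, ← Nat.card_coe_set_eq] at this
    exact lt_of_le_of_lt h1 h2

lemma crux_odd {p : ℕ} (hp : p.Prime) (hp2 : p ≠ 2) {G : Type*} [Group G] [Finite G]
    (hpg : IsPGroup p G) (hcent : ∀ t : G, t ^ p = 1 → t ∈ Subgroup.center G) :
    ∀ x g : G, x ^ (p * p) = 1 → ⁅x, g⁆ ^ p = 1 := by
  haveI : Fact p.Prime := ⟨hp⟩
  suffices h : ∀ n : ℕ, ∀ x g : G, Nat.card (Subgroup.closure ({x, g} : Set G)) ≤ n →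
      x ^ (p * p) = 1 → ⁅x, g⁆ ^ p = 1 by
    intro x g hx; exact h _ x g le_rfl hx
  intro n
  induction n with
  | zero =>
    intro x g hle _
    have : 0 < Nat.card (Subgroup.closure ({x, g} : Set G)) := Nat.card_pos
    omega
  | succ n ih =>
    intro x g hcard hx
    rcases smaller_pair hpg x g with hc | hlt
    · rw [commutatorElement_eq_one_iff_commute.mpr hc, one_pow]
    · set y := g * x * g⁻¹ with hy
      have hyx : Nat.card (Subgroup.closure ({y, x⁻¹} : Set G)) ≤ n := by omega
      have hyp : y ^ (p * p) = 1 := by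
        rw [hy, conj_pow, hx, mul_one, mul_inv_cancel]
      have hz1 : ⁅y, x⁻¹⁆ ^ p = 1 := ih y x⁻¹ hyx hyp
      set z := ⁅y, x⁻¹⁆ with hzdef
      have hzc : ∀ w : G, Commute z w := fun w =>
        ((Subgroup.mem_center_iff.mp (hcent z hz1) w)).symm
      have hxp1 : (x ^ p) ^ p = 1 := by rw [← pow_mul]; exact hx
      have hxpc : ∀ w : G, Commute (x ^ p) w := fun w =>
        ((Subgroup.mem_center_iff.mp (hcent _ hxp1) w)).symm
      have hrel : y⁻¹ * x = x * y⁻¹ * z := by rw [hzdef]; group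
      have hform := central_collect hzc hrel p
      have hcom : ⁅x, g⁆ = x * y⁻¹ := by rw [hy]; group
      have hyppow : y ^ p = x ^ p := by
        rw [hy, conj_pow]
        rw [(hxpc g).symm.eq, mul_assoc, mul_inv_cancel, mul_one]
      rw [hcom, hform, inv_pow, hyppow, mul_inv_cancel, one_mul]
      obtain ⟨m, hm⟩ := hp.dvd_choose_self (k := 2) (by norm_num)
        (lt_of_le_of_ne hp.two_le (Ne.symm hp2))
      rw [hm, pow_mul, hz1, one_pow]

lemma crux_two {G : Type*} [Group G] [Finite G]
    (hpg : IsPGroup 2 G) (hcent : ∀ t : G, t ^ 4 = 1 → t ∈ Subgroup.center G) :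
    ∀ x g : G, x ^ (2 * 4) = 1 → ⁅x, g⁆ ^ 2 = 1 := by
  haveI : Fact (Nat.Prime 2) := ⟨Nat.prime_two⟩
  suffices h : ∀ n : ℕ, ∀ x g : G, Nat.card (Subgroup.closure ({x, g} : Set G)) ≤ n →
      x ^ (2 * 4) = 1 → ⁅x, g⁆ ^ 2 = 1 by
    intro x g hx; exact h _ x g le_rfl hx
  intro n
  induction n with
  | zero =>
    intro x g hle _
    have : 0 < Nat.card (Subgroup.closure ({x, g} : Set G)) := Nat.card_pos
    omega
  | succ n ih =>
    intro x g hcard hx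
    rcases smaller_pair hpg x g with hc | hlt
    · rw [commutatorElement_eq_one_iff_commute.mpr hc, one_pow]
    · set y := g * x * g⁻¹ with hy
      have hyx : Nat.card (Subgroup.closure ({y, x⁻¹} : Set G)) ≤ n := by omega
      have hyp : y ^ (2 * 4) = 1 := by
        rw [hy, conj_pow, hx, mul_one, mul_inv_cancel]
      have hz1 : ⁅y, x⁻¹⁆ ^ 2 = 1 := ih y x⁻¹ hyx hyp
      set z := ⁅y, x⁻¹⁆ with hzdef
      have hz4 : z ^ 4 = 1 := by
        rw [show (4 : ℕ) = 2 * 2 from rfl, pow_mul, hz1, one_pow]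
      have hzc : ∀ w : G, Commute z w := fun w =>
        ((Subgroup.mem_center_iff.mp (hcent z hz4) w)).symm
      have hx2 : (x ^ 2) ^ 4 = 1 := by rw [← pow_mul, mul_comm]; exact hx
      have hx2c : ∀ w : G, Commute (x ^ 2) w := fun w =>
        ((Subgroup.mem_center_iff.mp (hcent _ hx2) w)).symm
      have hrel : y⁻¹ * x = x * y⁻¹ * z := by rw [hzdef]; group
      have hform := central_collect hzc hrel 2
      have hcom : ⁅x, g⁆ = x * y⁻¹ := by rw [hy]; group
      have hyppow : y ^ 2 = x ^ 2 := by
        rw [hy, conj_pow]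
        rw [(hx2c g).symm.eq, mul_assoc, mul_inv_cancel, mul_one]
      have hcsq : ⁅x, g⁆ ^ 2 = z := by
        rw [hcom, hform, inv_pow, hyppow, mul_inv_cancel, one_mul]
        norm_num
      -- hence ⁅x,g⁆ has order dividing 4, so it is central
      have hc4 : ⁅x, g⁆ ^ 4 = 1 := by
        rw [show (4 : ℕ) = 2 * 2 from rfl, pow_mul, hcsq, hz1]
      have hcc : ∀ w : G, Commute (⁅x, g⁆) w := fun w =>
        ((Subgroup.mem_center_iff.mp (hcent _ hc4) w)).symm
      -- x * c * x⁻¹ * c = ⁅x^2, g⁆ = 1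
      have hid : x * ⁅x, g⁆ * x⁻¹ * ⁅x, g⁆ = ⁅x ^ 2, g⁆ := by
        rw [show x ^ 2 = x * x from sq x]; group
      have hx2g : ⁅x ^ 2, g⁆ = 1 := commutatorElement_eq_one_iff_commute.mpr (hx2c g)
      have hfix : x * ⁅x, g⁆ * x⁻¹ = ⁅x, g⁆ := by
        rw [(hcc x).symm.eq, mul_assoc, mul_inv_cancel, mul_one]
      rw [hfix, hx2g] at hid
      -- c * c = 1
      calc ⁅x, g⁆ ^ 2 = ⁅x, g⁆ * ⁅x, g⁆ := sq ⁅x, g⁆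
        _ = 1 := hid

universe u v

lemma schur_main {p : ℕ} (hp : p.Prime) {ω : ℕ} (hpω : p ∣ ω)
    (hcrux : ∀ (G' : Type u) [Group G'] [Finite G'], IsPGroup p G' →
      (∀ t : G', t ^ ω = 1 → t ∈ Subgroup.center G') →
      ∀ x g : G', x ^ (p * ω) = 1 → ⁅x, g⁆ ^ p = 1) :
    ∀ (f : ℕ) (G : Type u) [Group G] [Finite G], IsPGroup p G →
      (∀ t : G, t ^ ω = 1 → t ∈ Subgroup.center G) →
      (∀ t : G, t ^ (p ^ f) = 1) →
      ∀ (E : Type v) [Group E] (q : E →* G),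
        (∀ a : E, q a = 1 → a ∈ Subgroup.center E) →
        ∀ w : E, w ∈ Subgroup.lowerCentralSeries (⊤ : Subgroup E) 1 → q w = 1 → w ^ (p ^ f) = 1 := by
  intro f
  induction f with
  | zero =>
    intro G _ _ hpg hcent hexp E _ q hker w hw hqw
    have hall : ∀ a : E, a ∈ Subgroup.center E := by
      intro a
      apply hker
      have := hexp (q a)
      rwa [pow_zero, pow_one] at this
    have hbot : Subgroup.lowerCentralSeries (⊤ : Subgroup E) 1 = ⊥ := by
      rw [show Subgroup.lowerCentralSeries (⊤ : Subgroup E) 1 = ⁅(⊤ : Subgroup E), ⊤⁆ from rfl]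
      refine le_antisymm ?_ bot_le
      rw [Subgroup.commutator_le]
      intro a _ b _
      rw [Subgroup.mem_bot]
      exact commutatorElement_eq_one_iff_commute.mpr
        ((Subgroup.mem_center_iff.mp (hall b) a))
    rw [hbot, Subgroup.mem_bot] at hw
    rw [hw, one_pow]
  | succ f ih =>
    intro G _ _ hpg hcent hexp E _ q hker w hw hqw
    -- `p`-torsion elements are central
    have hPtor : ∀ t : G, t ^ p = 1 → t ∈ Subgroup.center G := by
      intro t ht
      apply hcent
      obtain ⟨m, rfl⟩ := hpω
      rw [pow_mul, ht, one_pow]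
    -- the subgroup of `p`-torsion elements
    have hmulN : ∀ a b : G, a ^ p = 1 → b ^ p = 1 → (a * b) ^ p = 1 := by
      intro a b ha hb
      have hab : Commute a b := (Subgroup.mem_center_iff.mp (hPtor a ha) b).symm
      rw [hab.mul_pow, ha, hb, one_mul]
    let N : Subgroup G :=
      { carrier := {t : G | t ^ p = 1}
        one_mem' := one_pow p
        mul_mem' := fun ha hb => hmulN _ _ ha hb
        inv_mem' := fun ha => by
          simp only [Set.mem_setOf_eq] at *
          rw [inv_pow, ha, inv_one] }
    have hmemN : ∀ t : G, t ∈ N ↔ t ^ p = 1 := fun t => Iff.rfl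
    haveI hNn : N.Normal := by
      constructor
      intro t ht gg
      rw [hmemN] at *
      rw [conj_pow, ht, mul_one, mul_inv_cancel]
    have hNle : N ≤ Subgroup.center G := fun t ht => hPtor t ht
    let B := N.comap q
    let D := ⁅(⊤ : Subgroup E), B⁆
    haveI : B.Normal := hNn.comap q
    haveI : D.Normal := Subgroup.commutator_normal ⊤ B
    have hBcomm : ∀ (e b : E), b ∈ B → q ⁅e, b⁆ = 1 := by
      intro e b hb
      rw [map_commutatorElement]
      exact commutatorElement_eq_one_iff_commute.mpr
        (Subgroup.mem_center_iff.mp (hNle (Subgroup.mem_comap.mp hb)) (q e))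
    have hDcent : ∀ (e b : E), b ∈ B → ⁅e, b⁆ ∈ Subgroup.center E := fun e b hb =>
      hker _ (hBcomm e b hb)
    -- the subgroup of central `p`-torsion elements of `E`
    let P : Subgroup E :=
      { carrier := {t : E | t ∈ Subgroup.center E ∧ t ^ p = 1}
        one_mem' := ⟨Subgroup.one_mem _, one_pow p⟩
        mul_mem' := by
          rintro a b ⟨hac, hap⟩ ⟨hbc, hbp⟩
          refine ⟨Subgroup.mul_mem _ hac hbc, ?_⟩
          have hab : Commute a b := (Subgroup.mem_center_iff.mp hac b).symm
          rw [hab.mul_pow, hap, hbp, one_mul]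
        inv_mem' := by
          rintro a ⟨hac, hap⟩
          exact ⟨Subgroup.inv_mem _ hac, by rw [inv_pow, hap, inv_one]⟩ }
    have hDP : D ≤ P := by
      rw [Subgroup.commutator_le]
      intro e _ b hb
      refine ⟨hDcent e b hb, ?_⟩
      have hhom : ∀ m : ℕ, ⁅e, b ^ m⁆ = ⁅e, b⁆ ^ m := by
        intro m
        induction m with
        | zero => simp
        | succ m ihm =>
          have hsplit : ⁅e, b * b ^ m⁆ = ⁅e, b⁆ * (b * ⁅e, b ^ m⁆ * b⁻¹) := by group
          have hcen := hDcent e (b ^ m) (B.pow_mem hb m)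
          have hconj : b * ⁅e, b ^ m⁆ * b⁻¹ = ⁅e, b ^ m⁆ := by
            rw [Subgroup.mem_center_iff.mp hcen b, mul_assoc, mul_inv_cancel, mul_one]
          rw [pow_succ', hsplit, hconj, ihm, ← pow_succ']
      have hbp : ⁅e, b ^ p⁆ = 1 := by
        have hqbp : q (b ^ p) = 1 := by
          rw [map_pow]
          exact hb
        have := hker (b ^ p) hqbp
        exact commutatorElement_eq_one_iff_commute.mpr
          ((Subgroup.mem_center_iff.mp this e).symm).symm
      rw [← hhom p, hbp]
    -- the quotient data
    let φ : E →* G ⧸ N := (QuotientGroup.mk' N).comp q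
    have hDφ : D ≤ φ.ker := by
      rw [Subgroup.commutator_le]
      intro e _ b hb
      rw [MonoidHom.mem_ker]
      show (QuotientGroup.mk' N) (q ⁅e, b⁆) = 1
      rw [hBcomm e b hb, map_one]
    let qbar : (E ⧸ D) →* G ⧸ N := QuotientGroup.lift D φ hDφ
    have hpgbar : IsPGroup p (G ⧸ N) := hpg.to_quotient N
    have hcentbar : ∀ t : G ⧸ N, t ^ ω = 1 → t ∈ Subgroup.center (G ⧸ N) := by
      intro t ht
      obtain ⟨u, rfl⟩ := QuotientGroup.mk_surjective t
      have hu : u ^ ω ∈ N := by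
        rw [← QuotientGroup.eq_one_iff, QuotientGroup.mk_pow]
        exact ht
      have huω : u ^ (p * ω) = 1 := by
        rw [mul_comm, pow_mul]
        exact hu
      apply Subgroup.mem_center_iff.mpr
      intro vv
      obtain ⟨g0, rfl⟩ := QuotientGroup.mk_surjective vv
      have hcg : ⁅u, g0⁆ ^ p = 1 := hcrux G hpg hcent u g0 huω
      have hN : ⁅u, g0⁆ ∈ N := hcg
      have h1 : ((⁅u, g0⁆ : G) : G ⧸ N) = 1 := (QuotientGroup.eq_one_iff _).mpr hN
      have h2 := map_commutatorElement (QuotientGroup.mk' N) u g0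
      simp only [QuotientGroup.mk'_apply] at h2
      rw [h2] at h1
      exact (commutatorElement_eq_one_iff_commute.mp h1).symm
    have hexpbar : ∀ t : G ⧸ N, t ^ (p ^ f) = 1 := by
      intro t
      obtain ⟨u, rfl⟩ := QuotientGroup.mk_surjective t
      rw [← QuotientGroup.mk_pow, QuotientGroup.eq_one_iff]
      show (u ^ p ^ f) ^ p = 1
      rw [← pow_mul, ← pow_succ]
      exact hexp u
    have hkerbar : ∀ a : E ⧸ D, qbar a = 1 → a ∈ Subgroup.center (E ⧸ D) := by
      intro a ha
      obtain ⟨e, rfl⟩ := QuotientGroup.mk_surjective a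
      have he : e ∈ B := by
        have hφ : φ e = 1 := ha
        have : (QuotientGroup.mk' N) (q e) = 1 := hφ
        rw [QuotientGroup.mk'_apply, QuotientGroup.eq_one_iff] at this
        exact this
      apply Subgroup.mem_center_iff.mpr
      intro vv
      obtain ⟨e', rfl⟩ := QuotientGroup.mk_surjective vv
      have hD : ⁅e', e⁆ ∈ D := Subgroup.commutator_mem_commutator (Subgroup.mem_top e') he
      have h1 : ((⁅e', e⁆ : E) : E ⧸ D) = 1 := (QuotientGroup.eq_one_iff _).mpr hD
      have h2 := map_commutatorElement (QuotientGroup.mk' D) e' e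
      simp only [QuotientGroup.mk'_apply] at h2
      rw [h2] at h1
      exact (commutatorElement_eq_one_iff_commute.mp h1)
    have hwbar : ((w : E ⧸ D)) ∈ Subgroup.lowerCentralSeries (⊤ : Subgroup (E ⧸ D)) 1 := by
      have hmap : Subgroup.map (QuotientGroup.mk' D) (Subgroup.lowerCentralSeries (⊤ : Subgroup E) 1) ≤
          Subgroup.lowerCentralSeries (⊤ : Subgroup (E ⧸ D)) 1 := by
        rw [show Subgroup.lowerCentralSeries (⊤ : Subgroup E) 1 = ⁅(⊤ : Subgroup E), ⊤⁆ from rfl,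
          show Subgroup.lowerCentralSeries (⊤ : Subgroup (E ⧸ D)) 1 = ⁅(⊤ : Subgroup (E ⧸ D)), ⊤⁆ from rfl,
          Subgroup.map_commutator]
        exact Subgroup.commutator_mono le_top le_top
      have := Subgroup.mem_map_of_mem (QuotientGroup.mk' D) hw
      simp only [QuotientGroup.mk'_apply] at this
      exact hmap this
    have hqwbar : qbar ((w : E ⧸ D)) = 1 := by
      show φ w = 1
      show (QuotientGroup.mk' N) (q w) = 1
      rw [hqw, map_one]
    have hrec := ih (G ⧸ N) hpgbar hcentbar hexpbar (E ⧸ D) qbar hkerbar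
      ((w : E ⧸ D)) hwbar hqwbar
    have hwD : w ^ (p ^ f) ∈ D := by
      rw [← QuotientGroup.eq_one_iff, QuotientGroup.mk_pow]
      exact hrec
    have hP := hDP hwD
    rw [pow_succ, pow_mul]
    exact hP.2

end SchurAux


theorem stmt_17 (p : ℕ) (hp : p.Prime) (G : Type*) [Group G] [Finite G]
    (hpg : IsPGroup p G) (hcent : IsPCentral p G)
    (r : ℕ) (π : FreeGroup (Fin r) →* G) (hπ : Function.Surjective π) :
    Monoid.exponent (↥(gamma (FreeGroup (Fin r)) 2 ⊓ π.ker) ⧸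
        ((⁅(⊤ : Subgroup (FreeGroup (Fin r))), π.ker⁆).subgroupOf
          (gamma (FreeGroup (Fin r)) 2 ⊓ π.ker)))
      ∣ Monoid.exponent G := by
  classical
  haveI : Fact p.Prime := ⟨hp⟩
  -- the exponent of `G` is a power of `p`
  obtain ⟨n, hn⟩ := hpg.exists_card_eq
  have hdvd : Monoid.exponent G ∣ p ^ n := by
    rw [← hn]; exact Group.exponent_dvd_nat_card
  obtain ⟨f, hfn, he⟩ := (Nat.dvd_prime_pow hp).mp hdvd
  have hexp : ∀ t : G, t ^ (p ^ f) = 1 := by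
    intro t; rw [← he]; exact Monoid.pow_exponent_eq_one t
  set F := FreeGroup (Fin r)
  set R := π.ker with hR
  set Kc : Subgroup F := ⁅(⊤ : Subgroup F), R⁆ with hKc
  haveI : Kc.Normal := Subgroup.commutator_normal ⊤ R
  have hKle : Kc ≤ π.ker := by
    rw [hKc, Subgroup.commutator_le]
    intro a _ b hb
    rw [MonoidHom.mem_ker, map_commutatorElement]
    rw [MonoidHom.mem_ker] at hb
    rw [hb]
    group
  set E := F ⧸ Kc with hE
  set q : E →* G := QuotientGroup.lift Kc π hKle with hq
  have hker : ∀ a : E, q a = 1 → a ∈ Subgroup.center E := by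
    intro a ha
    obtain ⟨x, rfl⟩ := QuotientGroup.mk_surjective a
    have hx : x ∈ R := by
      rw [hR, MonoidHom.mem_ker]
      exact ha
    apply Subgroup.mem_center_iff.mpr
    intro vv
    obtain ⟨y, rfl⟩ := QuotientGroup.mk_surjective vv
    have hD : ⁅y, x⁆ ∈ Kc := Subgroup.commutator_mem_commutator (Subgroup.mem_top y) hx
    have h1 : ((⁅y, x⁆ : F) : E) = 1 := (QuotientGroup.eq_one_iff _).mpr hD
    have h2 := map_commutatorElement (QuotientGroup.mk' Kc) y x
    simp only [QuotientGroup.mk'_apply] at h2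
    rw [h2] at h1
    exact commutatorElement_eq_one_iff_commute.mp h1
  -- the main statement, applied to elements of `γ₂(F) ∩ R`
  have hmain : ∀ w : F, w ∈ Subgroup.lowerCentralSeries (⊤ : Subgroup F) 1 → π w = 1 → ((w : E)) ^ (p ^ f) = 1 := by
    intro w hw hπw
    have hw' : ((w : E)) ∈ Subgroup.lowerCentralSeries (⊤ : Subgroup E) 1 := by
      have hmap : Subgroup.map (QuotientGroup.mk' Kc) (Subgroup.lowerCentralSeries (⊤ : Subgroup F) 1) ≤
          Subgroup.lowerCentralSeries (⊤ : Subgroup E) 1 := by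
        rw [show Subgroup.lowerCentralSeries (⊤ : Subgroup F) 1 = ⁅(⊤ : Subgroup F), ⊤⁆ from rfl,
          show Subgroup.lowerCentralSeries (⊤ : Subgroup E) 1 = ⁅(⊤ : Subgroup E), ⊤⁆ from rfl,
          Subgroup.map_commutator]
        exact Subgroup.commutator_mono le_top le_top
      have := Subgroup.mem_map_of_mem (QuotientGroup.mk' Kc) hw
      simp only [QuotientGroup.mk'_apply] at this
      exact hmap this
    have hqw : q ((w : E)) = 1 := by
      show QuotientGroup.lift Kc π hKle ((w : F ⧸ Kc)) = 1
      rw [QuotientGroup.lift_mk']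
      exact hπw
    by_cases hp2 : p = 2
    · subst hp2
      have hcent4 : ∀ t : G, t ^ 4 = 1 → t ∈ Subgroup.center G := by
        intro t ht
        unfold IsPCentral at hcent
        rw [if_pos rfl] at hcent
        refine hcent (Subgroup.subset_closure ?_)
        show t ^ 2 ^ 2 = 1
        norm_num [ht]
      exact schur_main hp (by norm_num : (2 : ℕ) ∣ 4)
        (fun G' _ _ hpg' hc' => crux_two hpg' hc') f G hpg hcent4 hexp E q hker
        ((w : E)) hw' hqw
    · have hcentp : ∀ t : G, t ^ p = 1 → t ∈ Subgroup.center G := by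
        intro t ht
        unfold IsPCentral at hcent
        rw [if_neg hp2] at hcent
        refine hcent (Subgroup.subset_closure ?_)
        show t ^ p ^ 1 = 1
        rwa [pow_one]
      exact schur_main hp (dvd_refl p)
        (fun G' _ _ hpg' hc' => crux_odd hp hp2 hpg' hc') f G hpg hcentp hexp E q hker
        ((w : E)) hw' hqw
  rw [he]
  apply Monoid.exponent_dvd_of_forall_pow_eq_one
  intro ξ
  obtain ⟨s, rfl⟩ := QuotientGroup.mk_surjective ξ
  rw [← QuotientGroup.mk_pow, QuotientGroup.eq_one_iff, Subgroup.mem_subgroupOf,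
    Subgroup.coe_pow]
  obtain ⟨hsa, hsb⟩ := Subgroup.mem_inf.mp s.2
  have hs1 : (s : F) ∈ Subgroup.lowerCentralSeries (⊤ : Subgroup F) 1 := hsa
  have hs2 : π (s : F) = 1 := by rwa [MonoidHom.mem_ker] at hsb
  have := hmain (s : F) hs1 hs2
  rwa [← QuotientGroup.mk_pow, QuotientGroup.eq_one_iff] at this
end
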